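/- Let 𝔛=(X,{R_i}_{i=0}^d) be a commutative association scheme generated by a non-symmetric relation R_1 satisfying R_1^2 ⊆ {R_1,R_{1*},R_2}, R_1R_{1*} ⊆ {R_0,R_1,R_{1*},R_2,R_{2*}}, and 2 ∉ {1*,2*}, with k_1 = k_2 > 1, and set I := {i : R_i ∈ R_1^2}. If |I| = 2, then I = {1*,2}; that is, the cases I = {1,1*} and I = {1,2} are impossible. -/

import Mathlib

/-- A `d`-class association scheme on a finite set `X`, with relations
`R 0, …, R d`, transposition map `star` (so that `Rᵢᵀ = R (star i)`) and
intersection numbers `p i j l = |Rᵢ(x) ∩ R_{j*}(y)|` for `(x,y) ∈ R l`. -/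
structure AssocScheme (X : Type*) [Fintype X] (d : ℕ) where
  R : Fin (d + 1) → X → X → Prop
  star : Fin (d + 1) → Fin (d + 1)
  p : Fin (d + 1) → Fin (d + 1) → Fin (d + 1) → ℕ
  R_nonempty : ∀ i, ∃ x y, R i x y
  R_diag : ∀ x y, R 0 x y ↔ x = y
  R_partition : ∀ x y, ∃! i, R i x y
  R_star : ∀ i x y, R i x y ↔ R (star i) y x
  p_count : ∀ i j l x y, R l x y →
    p i j l = Set.ncard {z | R i x z ∧ R (star j) y z}

namespace AssocScheme

variable {X : Type*} [Fintype X] {d : ℕ}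

/-- The valency `kᵢ = p_{i,i*}^0` of the relation `Rᵢ`. -/
def valency (A : AssocScheme X d) (i : Fin (d + 1)) : ℕ := A.p i (A.star i) 0

/-- A scheme is commutative if `p_{i,j}^l = p_{j,i}^l` for all `i,j,l`. -/
def IsCommutative (A : AssocScheme X d) : Prop := ∀ i j l, A.p i j l = A.p j i l

/-- The index set of the complex product `Rᵢ Rⱼ`, i.e. `{l | p_{i,j}^l ≠ 0}`. -/
def prodIdx (A : AssocScheme X d) (i j : Fin (d + 1)) : Set (Fin (d + 1)) :=
  {l | A.p i j l ≠ 0}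

/-- A set of relations (given by its index set) is closed if it is closed
under `R_{i*} R_j`. -/
def IsClosed (A : AssocScheme X d) (F : Set (Fin (d + 1))) : Prop :=
  ∀ i ∈ F, ∀ j ∈ F, ∀ l, A.p (A.star i) j l ≠ 0 → l ∈ F

/-- `Rⱼ` generates the scheme if the smallest closed subset containing `Rⱼ`
consists of all relations. -/
def Generates (A : AssocScheme X d) (j : Fin (d + 1)) : Prop :=
  ∀ F : Set (Fin (d + 1)), A.IsClosed F → j ∈ F → F = Set.univ

end AssocScheme

namespace AssocScheme

open Finset
open scoped Classical

attribute [local instance 2000] Classical.propDecidable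

variable {X : Type*} [Fintype X] {d : ℕ} {A : AssocScheme X d}

/-- count of a predicate -/
noncomputable def cnt {X : Type*} [Fintype X] (P : X → Prop) : ℕ :=
  (Finset.univ.filter P).card

lemma ncard_eq_cnt (P : X → Prop) : Set.ncard {z | P z} = cnt P := by
  rw [Set.ncard_eq_toFinset_card']
  simp [cnt]

lemma cnt_congr {P Q : X → Prop} (h : ∀ z, P z ↔ Q z) : cnt P = cnt Q := by
  unfold cnt
  congr 1
  exact Finset.filter_congr fun z _ => h z

lemma cnt_ne_zero {P : X → Prop} : cnt P ≠ 0 ↔ ∃ z, P z := by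
  unfold cnt
  rw [Ne, Finset.card_eq_zero, ← Ne, ← Finset.nonempty_iff_ne_empty]
  simp [Finset.filter_nonempty_iff]

lemma cnt_eq_sum (P : X → Prop) : cnt P = ∑ z, if P z then 1 else 0 := by
  unfold cnt
  rw [Finset.card_filter]

lemma R_unique {l m : Fin (d+1)} {x y : X} (hl : A.R l x y) (hm : A.R m x y) : l = m := by
  obtain ⟨i, hi, hu⟩ := A.R_partition x y
  rw [hu l hl, hu m hm]

lemma star_star (i : Fin (d+1)) : A.star (A.star i) = i := by
  obtain ⟨x, y, h⟩ := A.R_nonempty i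
  have h2 : A.R (A.star (A.star i)) x y := by
    rw [← A.R_star, ← A.R_star]; exact h
  exact R_unique h2 h

lemma star_zero : A.star 0 = (0 : Fin (d+1)) := by
  obtain ⟨x, _, _⟩ := A.R_nonempty 0
  have hx : A.R 0 x x := (A.R_diag x x).2 rfl
  have h2 : A.R (A.star 0) x x := (A.R_star 0 x x).1 hx
  exact R_unique h2 hx

lemma star_inj {i j : Fin (d+1)} (h : A.star i = A.star j) : i = j := by
  have := congrArg A.star h
  rwa [star_star, star_star] at this


/-- the class of a pair -/
noncomputable def cls (A : AssocScheme X d) (x y : X) : Fin (d+1) :=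
  (A.R_partition x y).choose

lemma cls_R (x y : X) : A.R (A.cls x y) x y :=
  (A.R_partition x y).choose_spec.1

lemma cls_eq {l : Fin (d+1)} {x y : X} (h : A.R l x y) : A.cls x y = l :=
  R_unique (cls_R x y) h

lemma p_cls (i j : Fin (d+1)) (x y : X) :
    A.p i j (A.cls x y) = cnt (fun z => A.R i x z ∧ A.R j z y) := by
  rw [A.p_count i j _ x y (cls_R x y), ncard_eq_cnt]
  exact cnt_congr fun z => by rw [← A.R_star]

lemma p_of_R {i j l : Fin (d+1)} {x y : X} (h : A.R l x y) :
    A.p i j l = cnt (fun z => A.R i x z ∧ A.R j z y) := by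
  rw [← cls_eq h]; exact p_cls i j x y

lemma valency_eq_cnt (i : Fin (d+1)) (x : X) :
    A.valency i = cnt (fun z => A.R i x z) := by
  have h0 : A.R 0 x x := (A.R_diag x x).2 rfl
  rw [valency, p_of_R h0]
  refine cnt_congr fun z => ?_
  rw [A.R_star (A.star i), star_star, and_self]

lemma valency_pos (i : Fin (d+1)) : 0 < A.valency i := by
  obtain ⟨x, y, h⟩ := A.R_nonempty i
  rw [valency_eq_cnt i x]
  exact Nat.pos_of_ne_zero (cnt_ne_zero.2 ⟨y, h⟩)

lemma valency_zero : A.valency 0 = 1 := by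
  obtain ⟨x, _, _⟩ := A.R_nonempty 0
  rw [valency_eq_cnt 0 x]
  have : ∀ z, A.R 0 x z ↔ z = x := by
    intro z; rw [A.R_diag]; exact eq_comm
  rw [cnt_congr this]
  unfold cnt
  refine Finset.card_eq_one.2 ⟨x, ?_⟩
  ext z
  simp

lemma cnt_cls_eq (x : X) (l : Fin (d+1)) :
    cnt (fun y => A.cls x y = l) = A.valency l := by
  rw [valency_eq_cnt l x]
  exact cnt_congr fun y => ⟨fun h => h ▸ cls_R x y, fun h => cls_eq h⟩

lemma sum_classes (x : X) (F : Fin (d+1) → ℕ) :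
    ∑ y : X, F (A.cls x y) = ∑ l, A.valency l * F l := by
  have h1 : ∀ y : X, F (A.cls x y) = ∑ l, if A.cls x y = l then F l else 0 := by
    intro y
    rw [Finset.sum_ite_eq Finset.univ (A.cls x y) F]
    simp
  calc ∑ y : X, F (A.cls x y) = ∑ y : X, ∑ l, if A.cls x y = l then F l else 0 :=
        Finset.sum_congr rfl fun y _ => h1 y
    _ = ∑ l, ∑ y : X, if A.cls x y = l then F l else 0 := Finset.sum_comm
    _ = ∑ l, A.valency l * F l := by
        refine Finset.sum_congr rfl fun l _ => ?_
        rw [← cnt_cls_eq x l, cnt_eq_sum, Finset.sum_mul]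
        refine Finset.sum_congr rfl fun y _ => ?_
        by_cases h : A.cls x y = l <;> simp [h]

lemma sum_ite_const (P : X → Prop) (c : ℕ) :
    (∑ z, if P z then c else 0) = cnt P * c := by
  rw [cnt_eq_sum, Finset.sum_mul]
  refine Finset.sum_congr rfl fun z _ => ?_
  by_cases h : P z <;> simp [h]

lemma cnt_eq_zero {P : X → Prop} (h : ∀ z, ¬ P z) : cnt P = 0 := by
  by_contra h'
  obtain ⟨z, hz⟩ := cnt_ne_zero.1 h'
  exact h z hz

lemma p_ne_zero_iff {l : Fin (d+1)} {x y : X} (h : A.R l x y) (i j : Fin (d+1)) :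
    A.p i j l ≠ 0 ↔ ∃ z, A.R i x z ∧ A.R j z y := by
  rw [p_of_R h, cnt_ne_zero]

lemma sum_classes_filtered (i : Fin (d+1)) (x z : X) (F : Fin (d+1) → ℕ) :
    (∑ w, if A.R i x w then F (A.cls z w) else 0)
      = ∑ m, A.p i (A.star m) (A.cls x z) * F m := by
  have h1 : ∀ w : X, (if A.R i x w then F (A.cls z w) else 0)
      = ∑ m, if A.cls z w = m ∧ A.R i x w then F m else 0 := by
    intro w
    by_cases h : A.R i x w
    · simp only [h, and_true]
      rw [Finset.sum_ite_eq Finset.univ (A.cls z w) F]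
      simp
    · simp [h]
  calc (∑ w, if A.R i x w then F (A.cls z w) else 0)
      = ∑ w, ∑ m, if A.cls z w = m ∧ A.R i x w then F m else 0 :=
        Finset.sum_congr rfl fun w _ => h1 w
    _ = ∑ m, ∑ w, if A.cls z w = m ∧ A.R i x w then F m else 0 := Finset.sum_comm
    _ = ∑ m, A.p i (A.star m) (A.cls x z) * F m := by
        refine Finset.sum_congr rfl fun m _ => ?_
        have h2 : (∑ w, if A.cls z w = m ∧ A.R i x w then F m else 0)
            = cnt (fun w => A.cls z w = m ∧ A.R i x w) * F m := sum_ite_const _ _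
        rw [h2]
        congr 1
        rw [p_cls]
        refine cnt_congr fun w => ?_
        constructor
        · rintro ⟨hc, hw⟩
          exact ⟨hw, (A.R_star m z w).1 (hc ▸ cls_R z w)⟩
        · rintro ⟨hw, hm⟩
          exact ⟨cls_eq ((A.R_star m z w).2 hm), hw⟩

lemma sum_p_mul_valency (i j : Fin (d+1)) :
    ∑ l, A.valency l * A.p i j l = A.valency i * A.valency j := by
  obtain ⟨x, _, _⟩ := A.R_nonempty 0
  rw [← sum_classes x (fun l => A.p i j l)]
  calc ∑ y : X, A.p i j (A.cls x y)
      = ∑ y : X, ∑ z, if A.R i x z ∧ A.R j z y then 1 else 0 := by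
        refine Finset.sum_congr rfl fun y _ => ?_
        rw [p_cls, cnt_eq_sum]
    _ = ∑ z, ∑ y : X, if A.R i x z ∧ A.R j z y then 1 else 0 := Finset.sum_comm
    _ = ∑ z, if A.R i x z then A.valency j else 0 := by
        refine Finset.sum_congr rfl fun z _ => ?_
        by_cases h : A.R i x z
        · simp only [h, true_and, if_true]
          rw [← cnt_eq_sum, ← valency_eq_cnt]
        · simp [h]
    _ = cnt (fun z => A.R i x z) * A.valency j := sum_ite_const _ _
    _ = A.valency i * A.valency j := by rw [← valency_eq_cnt]

lemma valency_star (i : Fin (d+1)) : A.valency (A.star i) = A.valency i := by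
  obtain ⟨x0, _, _⟩ := A.R_nonempty 0
  have h : ∑ x : X, ∑ y : X, (if A.R i x y then 1 else 0 : ℕ)
      = ∑ y : X, ∑ x : X, (if A.R i x y then 1 else 0 : ℕ) := Finset.sum_comm
  have h1 : ∑ x : X, ∑ y : X, (if A.R i x y then 1 else 0 : ℕ)
      = Fintype.card X * A.valency i := by
    rw [Finset.sum_congr rfl fun x _ => by rw [← cnt_eq_sum, ← valency_eq_cnt]]
    rw [Finset.sum_const, smul_eq_mul, Finset.card_univ]
  have h2 : ∑ y : X, ∑ x : X, (if A.R i x y then 1 else 0 : ℕ)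
      = Fintype.card X * A.valency (A.star i) := by
    have e : ∀ y : X, ∑ x : X, (if A.R i x y then 1 else 0 : ℕ) = A.valency (A.star i) := by
      intro y
      have : ∀ x : X, (if A.R i x y then 1 else 0 : ℕ) = if A.R (A.star i) y x then 1 else 0 :=
        fun x => if_congr (A.R_star i x y) rfl rfl
      rw [Finset.sum_congr rfl fun x _ => this x, ← cnt_eq_sum, ← valency_eq_cnt]
    rw [Finset.sum_congr rfl fun y _ => e y, Finset.sum_const, smul_eq_mul, Finset.card_univ]
  have hcard : 0 < Fintype.card X := Fintype.card_pos_iff.2 ⟨x0⟩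
  exact Nat.eq_of_mul_eq_mul_left hcard (by rw [← h2, ← h, h1])

lemma cnt_mul_cnt (P Q : X → Prop) :
    cnt P * cnt Q = ∑ z, ∑ w, if P z ∧ Q w then 1 else 0 := by
  rw [cnt_eq_sum, cnt_eq_sum, Finset.sum_mul_sum]
  refine Finset.sum_congr rfl fun z _ => Finset.sum_congr rfl fun w _ => ?_
  by_cases h1 : P z <;> by_cases h2 : Q w <;> simp [h1, h2]

/-- the triple counting identity `k_i p_{j,l*}^i = k_l p_{i*,j}^l`. -/
lemma triple_identity (i j l : Fin (d+1)) :
    A.valency i * A.p j (A.star l) i = A.valency l * A.p (A.star i) j l := by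
  obtain ⟨x0, _, _⟩ := A.R_nonempty 0
  have hcard : 0 < Fintype.card X := Fintype.card_pos_iff.2 ⟨x0⟩
  have key1 : ∀ x z : X, (if A.R i x z then A.p j (A.star l) i else 0)
      = ∑ w, if A.R j x w ∧ A.R l z w then (if A.R i x z then 1 else 0) else 0 := by
    intro x z
    by_cases h : A.R i x z
    · simp only [h, if_true]
      have hp : A.p j (A.star l) i = cnt (fun w => A.R j x w ∧ A.R (A.star l) w z) := p_of_R h
      rw [hp, cnt_eq_sum]
      refine Finset.sum_congr rfl fun w _ => ?_
      refine if_congr (and_congr_right fun _ => ?_) rfl rfl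
      rw [A.R_star (A.star l), star_star]
    · simp [h]
  have key2 : ∀ z w : X, (if A.R l z w then A.p (A.star i) j l else 0)
      = ∑ x, if A.R j x w ∧ A.R l z w then (if A.R i x z then 1 else 0) else 0 := by
    intro z w
    by_cases h : A.R l z w
    · simp only [h, and_true, if_true]
      have hp : A.p (A.star i) j l = cnt (fun x => A.R (A.star i) z x ∧ A.R j x w) := p_of_R h
      rw [hp, cnt_eq_sum]
      refine Finset.sum_congr rfl fun x _ => ?_
      have : (A.R j x w ∧ A.R i x z) ↔ (A.R (A.star i) z x ∧ A.R j x w) := by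
        rw [← A.R_star i x z]; tauto
      by_cases h1 : A.R j x w <;> by_cases h2 : A.R i x z <;>
        simp [h1, h2, ← A.R_star i x z] <;> tauto
    · simp [h]
  have e1 : ∑ x : X, ∑ z : X, (if A.R i x z then A.p j (A.star l) i else 0)
      = Fintype.card X * (A.valency i * A.p j (A.star l) i) := by
    have : ∀ x : X, ∑ z : X, (if A.R i x z then A.p j (A.star l) i else 0)
        = A.valency i * A.p j (A.star l) i := by
      intro x
      rw [sum_ite_const, ← valency_eq_cnt]
    rw [Finset.sum_congr rfl fun x _ => this x, Finset.sum_const, smul_eq_mul, Finset.card_univ]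
  have e2 : ∑ z : X, ∑ w : X, (if A.R l z w then A.p (A.star i) j l else 0)
      = Fintype.card X * (A.valency l * A.p (A.star i) j l) := by
    have : ∀ z : X, ∑ w : X, (if A.R l z w then A.p (A.star i) j l else 0)
        = A.valency l * A.p (A.star i) j l := by
      intro z
      rw [sum_ite_const, ← valency_eq_cnt]
    rw [Finset.sum_congr rfl fun z _ => this z, Finset.sum_const, smul_eq_mul, Finset.card_univ]
  have main : ∑ x : X, ∑ z : X, (if A.R i x z then A.p j (A.star l) i else 0)
      = ∑ z : X, ∑ w : X, (if A.R l z w then A.p (A.star i) j l else 0) := by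
    calc ∑ x : X, ∑ z : X, (if A.R i x z then A.p j (A.star l) i else 0)
        = ∑ x : X, ∑ z : X, ∑ w : X,
            (if A.R j x w ∧ A.R l z w then (if A.R i x z then 1 else 0) else 0) :=
          Finset.sum_congr rfl fun x _ => Finset.sum_congr rfl fun z _ => key1 x z
      _ = ∑ z : X, ∑ w : X, ∑ x : X,
            (if A.R j x w ∧ A.R l z w then (if A.R i x z then 1 else 0) else 0) := by
          rw [Finset.sum_comm]
          exact Finset.sum_congr rfl fun z _ => Finset.sum_comm
      _ = ∑ z : X, ∑ w : X, (if A.R l z w then A.p (A.star i) j l else 0) :=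
          Finset.sum_congr rfl fun z _ => Finset.sum_congr rfl fun w _ => (key2 z w).symm
  exact Nat.eq_of_mul_eq_mul_left hcard (by rw [← e1, main, e2])

/-- the squared-coefficient identity
`∑_l k_l (p_{i,j}^l)² = ∑_m k_m p_{i*,i}^m p_{j,j*}^m`. -/
lemma sq_identity (i j : Fin (d+1)) :
    ∑ l, A.valency l * (A.p i j l * A.p i j l)
      = ∑ m, A.valency m * (A.p (A.star i) i m * A.p j (A.star j) m) := by
  obtain ⟨x, _, _⟩ := A.R_nonempty 0
  rw [← sum_classes x (fun l => A.p i j l * A.p i j l)]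
  have step1 : ∀ y : X, A.p i j (A.cls x y) * A.p i j (A.cls x y)
      = ∑ z, ∑ w, if (A.R i x z ∧ A.R j z y) ∧ (A.R i x w ∧ A.R j w y) then 1 else 0 := by
    intro y
    rw [p_cls, cnt_mul_cnt]
  calc ∑ y : X, A.p i j (A.cls x y) * A.p i j (A.cls x y)
      = ∑ y : X, ∑ z, ∑ w,
          (if (A.R i x z ∧ A.R j z y) ∧ (A.R i x w ∧ A.R j w y) then 1 else 0 : ℕ) :=
        Finset.sum_congr rfl fun y _ => step1 y
    _ = ∑ z, ∑ w, ∑ y : X,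
          (if (A.R i x z ∧ A.R j z y) ∧ (A.R i x w ∧ A.R j w y) then 1 else 0 : ℕ) := by
        rw [Finset.sum_comm]
        exact Finset.sum_congr rfl fun z _ => Finset.sum_comm
    _ = ∑ z, ∑ w, (if A.R i x z ∧ A.R i x w
          then A.p j (A.star j) (A.cls z w) else 0 : ℕ) := by
        refine Finset.sum_congr rfl fun z _ => Finset.sum_congr rfl fun w _ => ?_
        by_cases h1 : A.R i x z
        · by_cases h2 : A.R i x w
          · simp only [h1, h2, true_and, if_true]
            have hp : A.p j (A.star j) (A.cls z w) = cnt (fun y => A.R j z y ∧ A.R j w y) := by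
              rw [p_cls]
              refine cnt_congr fun y => and_congr_right fun _ => ?_
              rw [A.R_star (A.star j), star_star]
            rw [hp, cnt_eq_sum]
          · refine Eq.trans (Finset.sum_eq_zero fun y _ => by simp [h2]) (by simp [h2])
        · refine Eq.trans (Finset.sum_eq_zero fun y _ => by simp [h1]) (by simp [h1])
    _ = ∑ z, (if A.R i x z
          then ∑ w, (if A.R i x w then A.p j (A.star j) (A.cls z w) else 0 : ℕ) else 0) := by
        refine Finset.sum_congr rfl fun z _ => ?_
        by_cases h1 : A.R i x z
        · simp only [h1, true_and, if_true]
        · refine Eq.trans (Finset.sum_eq_zero fun w _ => by simp [h1]) (by simp [h1])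
    _ = ∑ z, (if A.R i x z
          then ∑ m, A.p i (A.star m) i * A.p j (A.star j) m else 0 : ℕ) := by
        refine Finset.sum_congr rfl fun z _ => ?_
        by_cases h1 : A.R i x z
        · simp only [h1, if_true]
          rw [sum_classes_filtered i x z (fun m => A.p j (A.star j) m), cls_eq h1]
        · simp [h1]
    _ = A.valency i * ∑ m, A.p i (A.star m) i * A.p j (A.star j) m := by
        rw [sum_ite_const, ← valency_eq_cnt]
    _ = ∑ m, A.valency m * (A.p (A.star i) i m * A.p j (A.star j) m) := by
        rw [Finset.mul_sum]
        refine Finset.sum_congr rfl fun m _ => ?_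
        rw [← mul_assoc, triple_identity i i m, mul_assoc]

/-- `p_{i,j}^l = p_{j*,i*}^{l*}`. -/
lemma p_conj (i j l : Fin (d+1)) :
    A.p i j l = A.p (A.star j) (A.star i) (A.star l) := by
  obtain ⟨x, y, h⟩ := A.R_nonempty l
  have h' : A.R (A.star l) y x := (A.R_star l x y).1 h
  rw [p_of_R h, p_of_R h']
  refine cnt_congr fun z => ?_
  rw [A.R_star i x z, A.R_star j z y]
  tauto

lemma p_at_zero (i j : Fin (d+1)) :
    A.p i j 0 = if j = A.star i then A.valency i else 0 := by
  obtain ⟨x, _, _⟩ := A.R_nonempty 0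
  have h0 : A.R 0 x x := (A.R_diag x x).2 rfl
  rw [p_of_R h0]
  by_cases h : j = A.star i
  · subst h
    rw [if_pos rfl, valency_eq_cnt i x]
    refine cnt_congr fun z => ?_
    rw [← A.R_star i x z]
    tauto
  · rw [if_neg h]
    refine cnt_eq_zero fun z => ?_
    rintro ⟨h1, h2⟩
    have h3 : A.R (A.star j) x z := (A.R_star j z x).1 h2
    have h4 : i = A.star j := R_unique h1 h3
    exact h (by rw [h4, star_star])

lemma p_zero_left {j l : Fin (d+1)} (h : l ≠ j) : A.p 0 j l = 0 := by
  obtain ⟨x, y, hl⟩ := A.R_nonempty l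
  rw [p_of_R hl]
  refine cnt_eq_zero fun z => ?_
  rintro ⟨h1, h2⟩
  have : x = z := (A.R_diag x z).1 h1
  subst this
  exact h (R_unique hl h2)

lemma p_zero_right {i l : Fin (d+1)} (h : l ≠ i) : A.p i 0 l = 0 := by
  obtain ⟨x, y, hl⟩ := A.R_nonempty l
  rw [p_of_R hl]
  refine cnt_eq_zero fun z => ?_
  rintro ⟨h1, h2⟩
  have : z = y := (A.R_diag z y).1 h2
  subst this
  exact h (R_unique hl h1)

lemma cnt_lt_cnt {P Q : X → Prop} (hsub : ∀ v, P v → Q v) (w : X) (hQ : Q w)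
    (hP : ¬ P w) : cnt P < cnt Q := by
  unfold cnt
  apply Finset.card_lt_card
  have hsub' : Finset.univ.filter P ⊆ Finset.univ.filter Q :=
    Finset.monotone_filter_right Finset.univ (fun v _ hv => hsub v hv)
  refine (Finset.ssubset_iff_of_subset hsub').2 ⟨w, ?_, ?_⟩
  · exact Finset.mem_filter.2 ⟨Finset.mem_univ w, hQ⟩
  · intro hw
    exact hP (Finset.mem_filter.1 hw).2

lemma sum_eval3 {g : Fin (d+1) → ℕ} {i1 i2 i3 : Fin (d+1)}
    (h12 : i1 ≠ i2) (h13 : i1 ≠ i3) (h23 : i2 ≠ i3)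
    (hz : ∀ l, l ≠ i1 → l ≠ i2 → l ≠ i3 → g l = 0) :
    ∑ l, g l = g i1 + g i2 + g i3 := by
  have e : ∑ l ∈ ({i1, i2, i3} : Finset (Fin (d+1))), g l = ∑ l, g l :=
    Finset.sum_subset (Finset.subset_univ _) (fun l _ hl => by
      simp only [Finset.mem_insert, Finset.mem_singleton] at hl
      push_neg at hl
      exact hz l hl.1 hl.2.1 hl.2.2)
  rw [← e, Finset.sum_insert (by simp [h12, h13]), Finset.sum_insert (by simp [h23]),
    Finset.sum_singleton, add_assoc]

lemma sum_eval5 {g : Fin (d+1) → ℕ} {i1 i2 i3 i4 i5 : Fin (d+1)}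
    (h12 : i1 ≠ i2) (h13 : i1 ≠ i3) (h14 : i1 ≠ i4) (h15 : i1 ≠ i5)
    (h23 : i2 ≠ i3) (h24 : i2 ≠ i4) (h25 : i2 ≠ i5)
    (h34 : i3 ≠ i4) (h35 : i3 ≠ i5) (h45 : i4 ≠ i5)
    (hz : ∀ l, l ≠ i1 → l ≠ i2 → l ≠ i3 → l ≠ i4 → l ≠ i5 → g l = 0) :
    ∑ l, g l = g i1 + g i2 + g i3 + g i4 + g i5 := by
  have e : ∑ l ∈ ({i1, i2, i3, i4, i5} : Finset (Fin (d+1))), g l = ∑ l, g l :=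
    Finset.sum_subset (Finset.subset_univ _) (fun l _ hl => by
      simp only [Finset.mem_insert, Finset.mem_singleton] at hl
      push_neg at hl
      exact hz l hl.1 hl.2.1 hl.2.2.1 hl.2.2.2.1 hl.2.2.2.2)
  rw [← e, Finset.sum_insert (by simp [h12, h13, h14, h15]),
    Finset.sum_insert (by simp [h23, h24, h25]),
    Finset.sum_insert (by simp [h34, h35]),
    Finset.sum_insert (by simp [h45]), Finset.sum_singleton]
  ring

end AssocScheme

set_option maxHeartbeats 1000000 in
open AssocScheme in
theorem sq_two_relations_determined
    {X : Type*} [Fintype X] {d : ℕ} (A : AssocScheme X d)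
    (hd : 2 ≤ d)
    (hcomm : A.IsCommutative)
    (hgen : A.Generates 1)
    (hns : A.star 1 ≠ 1)
    (h1a : A.prodIdx 1 1 ⊆ {1, A.star 1, 2})
    (h1b : A.prodIdx 1 (A.star 1) ⊆ {0, 1, A.star 1, 2, A.star 2})
    (h1c : (2 : Fin (d + 1)) ≠ A.star 1 ∧ (2 : Fin (d + 1)) ≠ A.star 2)
    (hk : A.valency 1 = A.valency 2)
    (hk1 : 1 < A.valency 1)
    (hI : (A.prodIdx 1 1).ncard = 2) :
    A.prodIdx 1 1 = {A.star 1, 2} := by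
  -- values of numerals in `Fin (d+1)`
  have hv1 : ((1 : Fin (d+1)) : ℕ) = 1 := by
    have h : ((1 : Fin (d+1)) : ℕ) = 1 % (d+1) := rfl
    rw [h]; exact Nat.mod_eq_of_lt (by omega)
  have hv2 : ((2 : Fin (d+1)) : ℕ) = 2 := by
    have h : ((2 : Fin (d+1)) : ℕ) = 2 % (d+1) := rfl
    rw [h]; exact Nat.mod_eq_of_lt (by omega)
  have n01 : (0 : Fin (d+1)) ≠ 1 := by
    intro h; have := congrArg Fin.val h; rw [Fin.val_zero, hv1] at this; omega
  have n02 : (0 : Fin (d+1)) ≠ 2 := by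
    intro h; have := congrArg Fin.val h; rw [Fin.val_zero, hv2] at this; omega
  have n12 : (1 : Fin (d+1)) ≠ 2 := by
    intro h; have := congrArg Fin.val h; rw [hv1, hv2] at this; omega
  have n1s1 : (1 : Fin (d+1)) ≠ A.star 1 := Ne.symm hns
  have n0s1 : (0 : Fin (d+1)) ≠ A.star 1 := by
    intro h; have := congrArg A.star h; rw [AssocScheme.star_zero, AssocScheme.star_star] at this; exact n01 this
  have n0s2 : (0 : Fin (d+1)) ≠ A.star 2 := by
    intro h; have := congrArg A.star h; rw [AssocScheme.star_zero, AssocScheme.star_star] at this; exact n02 this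
  have n1s2 : (1 : Fin (d+1)) ≠ A.star 2 := by
    intro h; have := congrArg A.star h; rw [AssocScheme.star_star] at this; exact h1c.1 this.symm
  have ns12 : A.star 1 ≠ 2 := Ne.symm h1c.1
  have ns1s2 : A.star 1 ≠ A.star 2 := fun h => n12 (AssocScheme.star_inj h)
  have n2s2 : (2 : Fin (d+1)) ≠ A.star 2 := h1c.2
  -- valencies
  have kpos : 0 < A.valency 1 := by omega
  have hval_s1 : A.valency (A.star 1) = A.valency 1 := valency_star 1
  have hval_2 : A.valency 2 = A.valency 1 := hk.symm
  have hval_s2 : A.valency (A.star 2) = A.valency 1 := by rw [valency_star 2, ← hk]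
  have hval_0 : A.valency 0 = 1 := valency_zero
  -- special intersection numbers
  have hq0 : A.p 1 (A.star 1) 0 = A.valency 1 := by rw [p_at_zero, if_pos rfl]
  have hq1s : A.p 1 (A.star 1) (A.star 1) = A.p 1 1 1 := by
    have h := triple_identity (A := A) 1 1 (A.star 1)
    rw [AssocScheme.star_star, hval_s1, hcomm (A.star 1) 1 (A.star 1)] at h
    exact (Nat.eq_of_mul_eq_mul_left kpos h).symm
  have hq1 : A.p 1 (A.star 1) 1 = A.p 1 1 1 := by
    have h := p_conj (A := A) 1 (A.star 1) 1
    rw [AssocScheme.star_star] at h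
    rw [h, hq1s]
  have hqs2 : A.p 1 (A.star 1) (A.star 2) = A.p 1 (A.star 1) 2 := by
    have h := p_conj (A := A) 1 (A.star 1) 2
    rw [AssocScheme.star_star] at h
    exact h.symm
  -- support
  have supp11 : ∀ l, l ≠ 1 → l ≠ A.star 1 → l ≠ 2 → A.p 1 1 l = 0 := by
    intro l e1 e2 e3
    by_contra h
    have := h1a h
    simp only [Set.mem_insert_iff, Set.mem_singleton_iff] at this
    tauto
  have supp1s : ∀ l, l ≠ 0 → l ≠ 1 → l ≠ A.star 1 → l ≠ 2 → l ≠ A.star 2 →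
      A.p 1 (A.star 1) l = 0 := by
    intro l e0 e1 e2 e3 e4
    by_contra h
    have := h1b h
    simp only [Set.mem_insert_iff, Set.mem_singleton_iff] at this
    tauto
  -- equation (i) : a + b + c = k
  have habc : A.p 1 1 1 + A.p 1 1 (A.star 1) + A.p 1 1 2 = A.valency 1 := by
    have sum1 := sum_p_mul_valency (A := A) 1 1
    rw [sum_eval3 n1s1 n12 ns12
      (fun l e1 e2 e3 => by rw [supp11 l e1 e2 e3, mul_zero])] at sum1
    rw [hval_s1, hval_2] at sum1
    refine Nat.eq_of_mul_eq_mul_left kpos ?_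
    rw [← sum1]; ring
  -- equation (iii) : k = 1 + 2a + 2γ
  have hkg : A.valency 1 = 1 + A.p 1 1 1 + A.p 1 1 1
      + A.p 1 (A.star 1) 2 + A.p 1 (A.star 1) 2 := by
    have sum2 := sum_p_mul_valency (A := A) 1 (A.star 1)
    rw [sum_eval5 n01 n0s1 n02 n0s2 n1s1 n12 n1s2 ns12 ns1s2 n2s2
      (fun l e0 e1 e2 e3 e4 => by rw [supp1s l e0 e1 e2 e3 e4, mul_zero])] at sum2
    rw [hval_0, hval_s1, hval_2, hval_s2, hq0, hq1, hq1s, hqs2, one_mul] at sum2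
    refine (Nat.eq_of_mul_eq_mul_left kpos ?_).symm
    rw [← sum2]; ring
  -- equation (iv)
  have hsq : A.p 1 1 1 * A.p 1 1 1 + A.p 1 1 (A.star 1) * A.p 1 1 (A.star 1)
      + A.p 1 1 2 * A.p 1 1 2
      = A.valency 1 + A.p 1 1 1 * A.p 1 1 1 + A.p 1 1 1 * A.p 1 1 1
        + A.p 1 (A.star 1) 2 * A.p 1 (A.star 1) 2
        + A.p 1 (A.star 1) 2 * A.p 1 (A.star 1) 2 := by
    have sq := sq_identity (A := A) 1 1
    simp only [hcomm (A.star 1) 1] at sq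
    rw [sum_eval3 n1s1 n12 ns12
      (fun l e1 e2 e3 => by rw [supp11 l e1 e2 e3]; ring)] at sq
    rw [sum_eval5 n01 n0s1 n02 n0s2 n1s1 n12 n1s2 ns12 ns1s2 n2s2
      (fun l e0 e1 e2 e3 e4 => by rw [supp1s l e0 e1 e2 e3 e4]; ring)] at sq
    rw [hval_0, hval_s1, hval_2, hval_s2, hq0, hq1, hq1s, hqs2, one_mul] at sq
    refine Nat.eq_of_mul_eq_mul_left kpos ?_
    rw [show A.valency 1 * (A.p 1 1 1 * A.p 1 1 1 + A.p 1 1 (A.star 1) * A.p 1 1 (A.star 1)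
      + A.p 1 1 2 * A.p 1 1 2) = A.valency 1 * (A.p 1 1 1 * A.p 1 1 1)
      + A.valency 1 * (A.p 1 1 (A.star 1) * A.p 1 1 (A.star 1))
      + A.valency 1 * (A.p 1 1 2 * A.p 1 1 2) from by ring, sq]
    ring
  -- main case analysis
  by_cases ha : A.p 1 1 1 = 0
  · have hsub : A.prodIdx 1 1 ⊆ {A.star 1, 2} := by
      intro l hl
      have h3 := h1a hl
      simp only [Set.mem_insert_iff, Set.mem_singleton_iff] at h3 ⊢
      rcases h3 with h | h | h
      · exfalso; rw [h] at hl; exact hl ha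
      · exact Or.inl h
      · exact Or.inr h
    refine Set.eq_of_subset_of_ncard_le hsub ?_ (Set.toFinite _)
    rw [hI, Set.ncard_pair ns12]
  · exfalso
    -- b = 0 or c = 0
    have hbc : A.p 1 1 (A.star 1) = 0 ∨ A.p 1 1 2 = 0 := by
      by_contra hcon
      push_neg at hcon
      have heq : A.prodIdx 1 1 = {1, A.star 1, 2} := by
        refine Set.Subset.antisymm h1a ?_
        intro l hl
        simp only [Set.mem_insert_iff, Set.mem_singleton_iff] at hl
        rcases hl with rfl | rfl | rfl
        · exact ha
        · exact hcon.1
        · exact hcon.2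
      rw [heq] at hI
      rw [Set.ncard_insert_of_notMem (by simp [n1s1, n12]) (Set.toFinite _),
        Set.ncard_pair ns12] at hI
      omega
    have hbc0 : A.p 1 1 (A.star 1) * A.p 1 1 2 = 0 := by
      rcases hbc with h | h <;> rw [h] <;> ring
    -- γ = 0
    have hg0 : A.p 1 (A.star 1) 2 = 0 := by
      have e1 : (A.p 1 1 1 : ℤ) + A.p 1 1 (A.star 1) + A.p 1 1 2 = A.valency 1 := by
        exact_mod_cast habc
      have e2 : (A.valency 1 : ℤ) = 1 + A.p 1 1 1 + A.p 1 1 1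
          + A.p 1 (A.star 1) 2 + A.p 1 (A.star 1) 2 := by
        exact_mod_cast hkg
      have e3 : (A.p 1 1 1 : ℤ) * A.p 1 1 1
          + A.p 1 1 (A.star 1) * A.p 1 1 (A.star 1) + A.p 1 1 2 * A.p 1 1 2
          = A.valency 1 + A.p 1 1 1 * A.p 1 1 1 + A.p 1 1 1 * A.p 1 1 1
            + A.p 1 (A.star 1) 2 * A.p 1 (A.star 1) 2
            + A.p 1 (A.star 1) 2 * A.p 1 (A.star 1) 2 := by
        exact_mod_cast hsq
      have e4 : (A.p 1 1 (A.star 1) : ℤ) * A.p 1 1 2 = 0 := by exact_mod_cast hbc0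
      have e5 : (A.p 1 1 (A.star 1) : ℤ) + A.p 1 1 2
          = 1 + A.p 1 1 1 + 2 * A.p 1 (A.star 1) 2 := by linarith
      have e6 : ((A.p 1 1 (A.star 1) : ℤ) + A.p 1 1 2) * ((A.p 1 1 (A.star 1) : ℤ) + A.p 1 1 2)
          = (1 + (A.p 1 1 1 : ℤ) + 2 * A.p 1 (A.star 1) 2)
            * (1 + (A.p 1 1 1 : ℤ) + 2 * A.p 1 (A.star 1) 2) := by
        rw [e5]
      have hg_nn : (0:ℤ) ≤ (A.p 1 (A.star 1) 2 : ℤ) := Int.natCast_nonneg _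
      have ha_nn : (0:ℤ) ≤ (A.p 1 1 1 : ℤ) := Int.natCast_nonneg _
      have hag : (0:ℤ) ≤ (A.p 1 1 1 : ℤ) * A.p 1 (A.star 1) 2 := mul_nonneg ha_nn hg_nn
      have hgg2 : (0:ℤ) ≤ (A.p 1 (A.star 1) 2 : ℤ) * A.p 1 (A.star 1) 2 :=
        mul_nonneg hg_nn hg_nn
      have key : 2*((A.p 1 (A.star 1) 2 : ℤ) * A.p 1 (A.star 1) 2)
          + 2 * (A.p 1 (A.star 1) 2 : ℤ)
          + 4 * ((A.p 1 1 1 : ℤ) * A.p 1 (A.star 1) 2) = 0 := by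
        linear_combination e3 - e6 + 2*e4 + e2
      have : (A.p 1 (A.star 1) 2 : ℤ) = 0 := by linarith
      exact_mod_cast this
    -- support of R1 R1*
    have hsupp : ∀ m, A.p 1 (A.star 1) m ≠ 0 → m = 0 ∨ m = 1 ∨ m = A.star 1 := by
      intro m hm
      have h5 := h1b hm
      simp only [Set.mem_insert_iff, Set.mem_singleton_iff] at h5
      rcases h5 with h | h | h | h | h
      · exact Or.inl h
      · exact Or.inr (Or.inl h)
      · exact Or.inr (Or.inr h)
      · exfalso; rw [h] at hm; exact hm hg0
      · exfalso; rw [h, hqs2] at hm; exact hm hg0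
    rcases hbc with hb0 | hc0
    · -- case B : b = 0, combinatorial contradiction
      classical
      have irrefl : ∀ u : X, ¬ A.R 1 u u := by
        intro u h
        exact n01 (R_unique ((A.R_diag u u).2 rfl) h)
      have no2 : ∀ u v : X, A.R 1 u v → A.R 1 v u → False := by
        intro u v h1 h2
        exact hns (R_unique ((A.R_star 1 v u).1 h2) h1)
      have no3 : ∀ u v w : X, A.R 1 u v → A.R 1 v w → A.R 1 w u → False := by
        intro u v w h1 h2 h3
        have hsw : A.R (A.star 1) u w := (A.R_star 1 w u).1 h3
        exact (p_ne_zero_iff hsw 1 1).2 ⟨v, h1, h2⟩ hb0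
      obtain ⟨s, t1, hst1⟩ := A.R_nonempty 1
      have tricho : ∀ u v : X, A.R 1 s u → A.R 1 s v → u ≠ v → A.R 1 u v ∨ A.R 1 v u := by
        intro u v hu hv hne
        have hl : A.R (A.cls u v) u v := cls_R u v
        have hne0 : A.p (A.star 1) 1 (A.cls u v) ≠ 0 :=
          (p_ne_zero_iff hl (A.star 1) 1).2 ⟨s, (A.R_star 1 s u).1 hu, hv⟩
        rw [hcomm] at hne0
        rcases hsupp _ hne0 with h | h | h
        · rw [h] at hl
          exact absurd ((A.R_diag u v).1 hl) hne
        · rw [h] at hl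
          exact Or.inl hl
        · rw [h] at hl
          exact Or.inr ((A.R_star 1 v u).2 hl)
      have htrans : ∀ u v w : X, A.R 1 s u → A.R 1 s v → A.R 1 s w →
          A.R 1 u v → A.R 1 v w → A.R 1 u w := by
        intro u v w hu hv hw h1 h2
        have hne : u ≠ w := by
          intro h
          exact no2 u v h1 (by rw [h]; exact h2)
        rcases tricho u w hu hw hne with h | h
        · exact h
        · exact (no3 u v w h1 h2 h).elim
      have hNne : (Finset.univ.filter (fun t => A.R 1 s t)).Nonempty :=
        ⟨t1, Finset.mem_filter.2 ⟨Finset.mem_univ t1, hst1⟩⟩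
      obtain ⟨t0, ht0mem, ht0min⟩ := Finset.exists_min_image _
        (fun t => cnt (fun v => A.R 1 s v ∧ A.R 1 v t)) hNne
      have ht0 : A.R 1 s t0 := (Finset.mem_filter.1 ht0mem).2
      obtain ⟨z, hz1, hz2⟩ := (p_ne_zero_iff ht0 1 1).1 ha
      have hzmem : z ∈ Finset.univ.filter (fun t => A.R 1 s t) :=
        Finset.mem_filter.2 ⟨Finset.mem_univ z, hz1⟩
      have hlt : cnt (fun v => A.R 1 s v ∧ A.R 1 v z)
          < cnt (fun v => A.R 1 s v ∧ A.R 1 v t0) := by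
        refine cnt_lt_cnt ?_ z ⟨hz1, hz2⟩ ?_
        · rintro v ⟨hv1, hv2⟩
          exact ⟨hv1, htrans v z t0 hv1 hz1 ht0 hv2 hz2⟩
        · rintro ⟨_, hzz⟩
          exact irrefl z hzz
      have := ht0min z hzmem
      omega
    · -- case A : c = 0, closedness contradiction
      have hp11m : ∀ m, A.p 1 1 m ≠ 0 → m = 1 ∨ m = A.star 1 := by
        intro m hm
        have h5 := h1a hm
        simp only [Set.mem_insert_iff, Set.mem_singleton_iff] at h5
        rcases h5 with h | h | h
        · exact Or.inl h
        · exact Or.inr h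
        · exfalso; rw [h] at hm; exact hm hc0
      have hF : A.IsClosed {0, 1, A.star 1} := by
        intro i hi j hj l hpl
        simp only [Set.mem_insert_iff, Set.mem_singleton_iff] at hi hj ⊢
        rcases hi with rfl | rfl | rfl
        · rw [AssocScheme.star_zero] at hpl
          have hlj : l = j := by
            by_contra h
            exact hpl (p_zero_left h)
          rcases hj with rfl | rfl | rfl
          · exact Or.inl hlj
          · exact Or.inr (Or.inl hlj)
          · exact Or.inr (Or.inr hlj)
        · rcases hj with rfl | rfl | rfl
          · have : l = A.star 1 := by
              by_contra h
              exact hpl (p_zero_right h)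
            exact Or.inr (Or.inr this)
          · rw [hcomm] at hpl
            exact hsupp l hpl
          · rw [p_conj (A := A) (A.star 1) (A.star 1) l, AssocScheme.star_star] at hpl
            rcases hp11m (A.star l) hpl with h | h
            · have h6 := congrArg A.star h
              rw [AssocScheme.star_star] at h6
              exact Or.inr (Or.inr h6)
            · have h6 := congrArg A.star h
              rw [AssocScheme.star_star, AssocScheme.star_star] at h6
              exact Or.inr (Or.inl h6)
        · rw [AssocScheme.star_star] at hpl
          rcases hj with rfl | rfl | rfl
          · have : l = 1 := by
              by_contra h
              exact hpl (p_zero_right h)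
            exact Or.inr (Or.inl this)
          · rcases hp11m l hpl with h | h
            · exact Or.inr (Or.inl h)
            · exact Or.inr (Or.inr h)
          · exact hsupp l hpl
      have huniv := hgen _ hF
        (by simp : (1 : Fin (d+1)) ∈ ({0, 1, A.star 1} : Set (Fin (d+1))))
      have h2mem : (2 : Fin (d+1)) ∈ ({0, 1, A.star 1} : Set (Fin (d+1))) := by
        rw [huniv]; trivial
      simp only [Set.mem_insert_iff, Set.mem_singleton_iff] at h2mem
      rcases h2mem with h | h | h
      · exact n02 h.symm
      · exact n12 h.symm
      · exact h1c.1 h
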